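/- Let (X,T,ℤ^d) be a topological dynamical system and π : X → Y a factor map onto a topological dynamical system (Y,S,ℤ^d). Then for every ε > 0 the set ND_{ℓ²}(X,ε,π) is a closed subset of the unit sphere 𝕊^{d−1} ⊆ ℝ^d, and consequently ND_{ℓ²}(X,π) = ⋂_{ε>0} ND_{ℓ²}(X,ε,π) is also closed. -/

import Mathlib

open Metric Filter Topology

/-- The open half-space (`ℓ²` horoball) of `ℤ^d` with outward normal vector `v`. -/
def halfSpaceZ {d : ℕ} (v : EuclideanSpace ℝ (Fin d)) : Set (Fin d → ℤ) :=
  {g | ∑ i, (g i : ℝ) * v i < 0}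

/-- The set `ND_{ℓ²}(X,ε,π)` of unit vectors `v` whose half-space `H_v` is
`(ε,π)`-nonexpansive. -/
def NDl2 {d : ℕ} {X Y : Type*} [MetricSpace X] (T : (Fin d → ℤ) → X → X) (π : X → Y)
    (ε : ℝ) : Set (EuclideanSpace ℝ (Fin d)) :=
  {v | ‖v‖ = 1 ∧ ∃ x y : X, x ≠ y ∧ π x = π y ∧
    ∀ g ∈ halfSpaceZ v, dist (T g x) (T g y) ≤ ε}

/-- Auxiliary pairing between a lattice point and a vector. -/
def ipz {d : ℕ} (g : Fin d → ℤ) (v : EuclideanSpace ℝ (Fin d)) : ℝ := ∑ i, (g i : ℝ) * v i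

lemma mem_halfSpaceZ {d : ℕ} {v : EuclideanSpace ℝ (Fin d)} {g : Fin d → ℤ} :
    g ∈ halfSpaceZ v ↔ ipz g v < 0 := Iff.rfl

lemma ipz_add {d : ℕ} (g h : Fin d → ℤ) (v : EuclideanSpace ℝ (Fin d)) :
    ipz (g + h) v = ipz g v + ipz h v := by
  simp only [ipz, ← Finset.sum_add_distrib]
  refine Finset.sum_congr rfl fun i _ => ?_
  have : (g + h) i = g i + h i := rfl
  rw [this]; push_cast; ring

lemma ipz_continuous {d : ℕ} (g : Fin d → ℤ) :
    Continuous fun v : EuclideanSpace ℝ (Fin d) => ipz g v := by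
  refine continuous_finset_sum _ fun i _ => ?_
  exact continuous_const.mul (PiLp.continuous_apply 2 _ i)

lemma exists_mem_halfSpaceZ {d : ℕ} {v : EuclideanSpace ℝ (Fin d)} (hv : ‖v‖ = 1) :
    ∃ g : Fin d → ℤ, ipz g v < 0 := by
  have hvne : v ≠ 0 := by intro h; rw [h] at hv; simp at hv
  obtain ⟨i, hi⟩ : ∃ i, v i ≠ 0 := by
    by_contra h; push_neg at h
    exact hvne (by ext i; exact h i)
  refine ⟨Pi.single i (if 0 < v i then -1 else 1), ?_⟩
  have hsum : ipz (Pi.single i (if 0 < v i then -1 else 1)) v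
      = ((if 0 < v i then (-1 : ℤ) else 1) : ℝ) * v i := by
    rw [ipz, Finset.sum_eq_single i]
    · simp
    · intro j _ hj; simp [Pi.single_apply, hj]
    · intro h; simp at h
  rw [hsum]
  rcases lt_or_gt_of_ne hi with h | h
  · simp only [if_neg (not_lt.2 h.le)]; norm_num; linarith
  · simp only [if_pos h]; push_cast; linarith

/-- Uniform expansiveness: if the half-space `H_v` is `(ε,π)`-expansive, then by compactness
some finite portion of it already suffices to force `ε`-closeness at the origin. -/
lemma uniform_claim {d : ℕ} {X Y : Type*} [MetricSpace X] [CompactSpace X] [MetricSpace Y]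
    (T : (Fin d → ℤ) → X → X) (hTc : ∀ g, Continuous (T g)) (π : X → Y) (hπc : Continuous π)
    (v : EuclideanSpace ℝ (Fin d)) {ε : ℝ} (hε : 0 < ε)
    (hexp : ∀ x y : X, π x = π y → (∀ g ∈ halfSpaceZ v, dist (T g x) (T g y) ≤ ε) → x = y) :
    ∃ K : Finset (Fin d → ℤ), ∀ x y : X, π x = π y →
      (∀ k ∈ K, k ∈ halfSpaceZ v → dist (T k x) (T k y) ≤ ε) → dist x y ≤ ε := by
  by_contra hcon
  push_neg at hcon
  set Z : Finset (Fin d → ℤ) → Set (X × X) := fun K =>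
    {p | π p.1 = π p.2 ∧ ε ≤ dist p.1 p.2 ∧
      ∀ k ∈ K, k ∈ halfSpaceZ v → dist (T k p.1) (T k p.2) ≤ ε} with hZ
  have hZc : ∀ K, IsClosed (Z K) := by
    intro K
    have h1 : IsClosed {p : X × X | π p.1 = π p.2} :=
      isClosed_eq (hπc.comp continuous_fst) (hπc.comp continuous_snd)
    have h2 : IsClosed {p : X × X | ε ≤ dist p.1 p.2} :=
      isClosed_le continuous_const continuous_dist
    have h3 : IsClosed {p : X × X | ∀ k ∈ K, k ∈ halfSpaceZ v →
        dist (T k p.1) (T k p.2) ≤ ε} := by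
      have heq : {p : X × X | ∀ k ∈ K, k ∈ halfSpaceZ v → dist (T k p.1) (T k p.2) ≤ ε}
          = ⋂ k ∈ K, ⋂ (_ : k ∈ halfSpaceZ v), {p : X × X | dist (T k p.1) (T k p.2) ≤ ε} := by
        ext p; simp
      rw [heq]
      refine isClosed_biInter fun k _ => isClosed_iInter fun _ => ?_
      exact isClosed_le (Continuous.dist ((hTc k).comp continuous_fst)
        ((hTc k).comp continuous_snd)) continuous_const
    have : Z K = {p : X × X | π p.1 = π p.2} ∩ ({p : X × X | ε ≤ dist p.1 p.2} ∩
        {p : X × X | ∀ k ∈ K, k ∈ halfSpaceZ v → dist (T k p.1) (T k p.2) ≤ ε}) := by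
      ext p; simp [hZ, and_assoc]
    rw [this]; exact h1.inter (h2.inter h3)
  have hZne : ∀ K, (Z K).Nonempty := by
    intro K
    obtain ⟨x, y, h1, h2, h3⟩ := hcon K
    exact ⟨(x, y), h1, le_of_lt h3, h2⟩
  have hdir : Directed (· ⊇ ·) Z := by
    intro K K'
    refine ⟨K ∪ K', fun p hp => ⟨hp.1, hp.2.1, fun k hk => hp.2.2 k (Finset.mem_union_left _ hk)⟩,
      fun p hp => ⟨hp.1, hp.2.1, fun k hk => hp.2.2 k (Finset.mem_union_right _ hk)⟩⟩
  obtain ⟨p, hp⟩ := IsCompact.nonempty_iInter_of_directed_nonempty_isCompact_isClosed Z hdir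
    hZne (fun K => (hZc K).isCompact) hZc
  have hp0 := Set.mem_iInter.1 hp ∅
  have heq : p.1 = p.2 := by
    refine hexp p.1 p.2 hp0.1 fun g hg => ?_
    exact (Set.mem_iInter.1 hp {g}).2.2 g (Finset.mem_singleton_self g) hg
  have := hp0.2.1
  rw [heq, dist_self] at this
  linarith

/-- Each `ND_{ℓ²}(X,ε,π)` is closed. -/
lemma NDl2_isClosed_aux
    {d : ℕ} {X Y : Type*} [MetricSpace X] [CompactSpace X] [MetricSpace Y]
    (T : (Fin d → ℤ) → X → X)
    (hTc : ∀ g, Continuous (T g))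
    (hTadd : ∀ (g h : Fin d → ℤ) (x : X), T g (T h x) = T (g + h) x)
    (S : (Fin d → ℤ) → Y → Y)
    (π : X → Y) (hπc : Continuous π)
    (hπeq : ∀ (g : Fin d → ℤ) (x : X), π (T g x) = S g (π x))
    (ε : ℝ) (hε : 0 < ε) : IsClosed (NDl2 T π ε) := by
  rw [← isOpen_compl_iff, isOpen_iff_mem_nhds]
  intro v hv
  by_cases hn : ‖v‖ = 1
  · -- `v` is a unit vector not in `NDl2`, i.e. the half-space `H_v` is `(ε,π)`-expansive
    have hexp : ∀ x y : X, π x = π y →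
        (∀ g ∈ halfSpaceZ v, dist (T g x) (T g y) ≤ ε) → x = y := by
      intro x y h1 h2
      by_contra hxy
      exact hv ⟨hn, x, y, hxy, h1, h2⟩
    obtain ⟨K, hK⟩ := uniform_claim T hTc π hπc v hε hexp
    obtain ⟨g0, hg0⟩ := exists_mem_halfSpaceZ hn
    classical
    set K₀ : Finset (Fin d → ℤ) := insert g0 (K.filter (· ∈ halfSpaceZ v)) with hK₀def
    have hK₀H : ∀ k ∈ K₀, ipz k v < 0 := by
      intro k hk
      rcases Finset.mem_insert.1 hk with h | h
      · rw [h]; exact hg0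
      · exact (Finset.mem_filter.1 h).2
    have hK₀ne : K₀.Nonempty := ⟨g0, Finset.mem_insert_self _ _⟩
    set m : ℝ := K₀.inf' hK₀ne (fun k => -(ipz k v)) with hmdef
    have hmpos : 0 < m := by
      rw [hmdef, Finset.lt_inf'_iff]
      intro k hk
      linarith [hK₀H k hk]
    have hmle : ∀ k ∈ K₀, ipz k v ≤ -m := by
      intro k hk
      have := Finset.inf'_le (fun k => -(ipz k v)) hk
      linarith [this]
    set U : Set (EuclideanSpace ℝ (Fin d)) := {w | ∀ k ∈ K₀, ipz k w < -(m / 2)} with hUdef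
    have hUopen : IsOpen U := by
      have : U = ⋂ k ∈ K₀, {w | ipz k w < -(m / 2)} := by ext w; simp [hUdef]
      rw [this]
      exact isOpen_biInter_finset fun k _ =>
        isOpen_lt (ipz_continuous k) continuous_const
    have hvU : v ∈ U := by
      intro k hk
      have := hmle k hk
      linarith
    refine Filter.mem_of_superset (hUopen.mem_nhds hvU) ?_
    intro v' hv' hmem
    obtain ⟨hn', x, y, hxy, hπxy, hdist⟩ := hmem
    -- bootstrap: `ε`-closeness propagates from `H_{v'}` to all of `ℤ^d`
    have key : ∀ j : ℕ, ∀ h : Fin d → ℤ, ipz h v' < j * (m / 4) →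
        dist (T h x) (T h y) ≤ ε := by
      intro j
      induction j with
      | zero =>
        intro h hh
        refine hdist h ?_
        have : ipz h v' < 0 := by push_cast at hh; linarith
        exact this
      | succ j ih =>
        intro h hh
        have hπ' : π (T h x) = π (T h y) := by rw [hπeq, hπeq, hπxy]
        refine hK (T h x) (T h y) hπ' ?_
        intro k hk hkH
        have hk0 : k ∈ K₀ := Finset.mem_insert_of_mem (Finset.mem_filter.2 ⟨hk, hkH⟩)
        have h1 : ipz (k + h) v' < j * (m / 4) := by
          rw [ipz_add]
          have h2 := hv' k hk0
          push_cast at hh ⊢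
          linarith
        rw [hTadd k h x, hTadd k h y]
        exact ih (k + h) h1
    have hall : ∀ g, dist (T g x) (T g y) ≤ ε := by
      intro g
      obtain ⟨n, hn2⟩ := exists_nat_gt (ipz g v' / (m / 4))
      refine key n g ?_
      rw [div_lt_iff₀ (by linarith : (0 : ℝ) < m / 4)] at hn2
      linarith
    exact hxy (hexp x y hπxy fun g _ => hall g)
  · -- `v` is not a unit vector: the complement of the unit sphere works
    refine Filter.mem_of_superset
      ((isOpen_compl_iff.2 (isClosed_eq continuous_norm continuous_const)).mem_nhds hn) ?_
    intro w hw hmem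
    exact hw hmem.1

/-- For a factor map `π` between `ℤ^d`-systems, each `ND_{ℓ²}(X,ε,π)` is a closed subset of
the unit sphere, and hence so is `ND_{ℓ²}(X,π) = ⋂_{ε>0} ND_{ℓ²}(X,ε,π)`. -/
theorem NDl2_isClosed
    {d : ℕ} {X Y : Type*} [MetricSpace X] [CompactSpace X] [MetricSpace Y] [CompactSpace Y]
    (T : (Fin d → ℤ) → X → X)
    (hTc : ∀ g, Continuous (T g))
    (hTadd : ∀ (g h : Fin d → ℤ) (x : X), T g (T h x) = T (g + h) x)
    (hTzero : ∀ x : X, T 0 x = x)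
    (S : (Fin d → ℤ) → Y → Y)
    (hSc : ∀ g, Continuous (S g))
    (hSadd : ∀ (g h : Fin d → ℤ) (y : Y), S g (S h y) = S (g + h) y)
    (hSzero : ∀ y : Y, S 0 y = y)
    (π : X → Y) (hπc : Continuous π) (hπs : Function.Surjective π)
    (hπeq : ∀ (g : Fin d → ℤ) (x : X), π (T g x) = S g (π x)) :
    (∀ ε > (0 : ℝ), IsClosed (NDl2 T π ε)) ∧
      IsClosed (⋂ ε > (0 : ℝ), NDl2 T π ε) := by
  have part1 : ∀ ε > (0 : ℝ), IsClosed (NDl2 T π ε) := fun ε hε =>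
    NDl2_isClosed_aux T hTc hTadd S π hπc hπeq ε hε
  exact ⟨part1, isClosed_iInter fun ε => isClosed_iInter fun hε => part1 ε hε⟩
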